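/- The element z = 𝒟 + 𝒟† + 2m − m_1 belongs to the center of the Lie algebra g_φ: [z, w] = 0 for every w ∈ g_φ. -/

import Mathlib

open Matrix
open scoped ContDiff

attribute [local instance] Matrix.normedAddCommGroup Matrix.normedSpace

noncomputable section

abbrev MatC (N : ℕ) := Matrix (Fin N) (Fin N) ℂ

/-- `J = Σ_{k=1}^N k E_{k,k}`. -/
def Jmat (N : ℕ) : MatC N := Matrix.diagonal fun k => ((k : ℕ) + 1 : ℂ)

/-- `A = Σ_{k=1}^{N-1} a_k E_{k+1,k}`. -/
def Amat (N : ℕ) (a : ℕ → ℝ) : MatC N :=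
  Matrix.of fun i j => if (i : ℕ) = (j : ℕ) + 1 then ((a ((j : ℕ) + 1) : ℝ) : ℂ) else 0

/-- the right-acting operator `𝒟`, `(Q·𝒟)(x) = x Q'(x) + x Q(x)(A−1)` -/
def OpD (N : ℕ) (a : ℕ → ℝ) : (ℝ → MatC N) → ℝ → MatC N := fun Q x =>
  (x : ℂ) • deriv Q x + (x : ℂ) • (Q x * (Amat N a - 1))

/-- the right-acting operator `𝒟†`,
`(Q·𝒟†)(x) = −x Q'(x) − Q(x)(1+ν+J) + (xφ'(x) − x) Q(x)` -/
def OpDdag (N : ℕ) (ν : ℝ) (φ : ℂ → ℂ) : (ℝ → MatC N) → ℝ → MatC N := fun Q x =>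
  -((x : ℂ) • deriv Q x) - Q x * (((1 : ℂ) + (ν : ℂ)) • (1 : MatC N) + Jmat N) +
    ((x : ℂ) * deriv φ (x : ℂ) - (x : ℂ)) • Q x

/-- the right-acting multiplication operator `m`, `(Q·m)(x) = x Q(x)` -/
def OpM (N : ℕ) : (ℝ → MatC N) → ℝ → MatC N := fun Q x => (x : ℂ) • Q x

/-- the right-acting multiplication operator `m_j`, `(Q·m_j)(x) = x^j φ^{(j)}(x) Q(x)` -/
def OpMj (N : ℕ) (φ : ℂ → ℂ) (j : ℕ) : (ℝ → MatC N) → ℝ → MatC N := fun Q x =>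
  ((x : ℂ) ^ j * iteratedDeriv j φ (x : ℂ)) • Q x

/-- the Lie bracket of right-acting operators: since `Q·(𝒮𝒯) = (Q·𝒮)·𝒯`, the product `𝒮𝒯`
acts as `T ∘ S`, and `[𝒮,𝒯] = 𝒮𝒯 − 𝒯𝒮` acts as `Q ↦ T (S Q) − S (T Q)`. -/
def rbrk {N : ℕ} (S T : (ℝ → MatC N) → ℝ → MatC N) : (ℝ → MatC N) → ℝ → MatC N :=
  fun Q => T (S Q) - S (T Q)

/-- the Lie algebra `g_φ`, i.e. the complex span of `{1, 𝒟, 𝒟†, m, m₁, m₂, …}` inside the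
space of right-acting operators -/
def gphi (N : ℕ) (a : ℕ → ℝ) (ν : ℝ) (φ : ℂ → ℂ) :
    Submodule ℂ ((ℝ → MatC N) → ℝ → MatC N) :=
  Submodule.span ℂ
    ({id, OpD N a, OpDdag N ν φ, OpM N} ∪ Set.range fun j : ℕ => OpMj N φ (j + 1))

/-- the element `z = 𝒟 + 𝒟† + 2m − m₁` -/
def zElt (N : ℕ) (a : ℕ → ℝ) (ν : ℝ) (φ : ℂ → ℂ) : (ℝ → MatC N) → ℝ → MatC N :=
  fun Q => OpD N a Q + OpDdag N ν φ Q + (2 : ℂ) • OpM N Q - OpMj N φ 1 Q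


/-! ### Auxiliary material for the proof -/

/-- `B = (1+ν)·1 + J`. -/
def Bmat (N : ℕ) (ν : ℝ) : MatC N :=
  ((1 : ℂ) + (ν : ℂ)) • (1 : MatC N) + Jmat N

lemma Bmat_def (N : ℕ) (ν : ℝ) :
    ((1 : ℂ) + (ν : ℂ)) • (1 : MatC N) + Jmat N = Bmat N ν := rfl

lemma keyJ (N : ℕ) (a : ℕ → ℝ) :
    Amat N a * Jmat N - Jmat N * Amat N a = -(Amat N a) := by
  ext i j
  simp only [Matrix.sub_apply, Matrix.neg_apply, Jmat, Matrix.mul_diagonal,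
    Matrix.diagonal_mul, Amat, Matrix.of_apply]
  by_cases h : (i : ℕ) = (j : ℕ) + 1
  · simp only [h, if_pos rfl, if_true]
    push_cast
    ring
  · simp [h]

lemma keyB (N : ℕ) (a : ℕ → ℝ) (ν : ℝ) :
    Amat N a * Bmat N ν = Bmat N ν * Amat N a - Amat N a := by
  have h2 : Amat N a * Jmat N = Jmat N * Amat N a - Amat N a := by
    have h := keyJ N a
    rw [sub_eq_iff_eq_add] at h
    rw [h]; abel
  simp only [Bmat, mul_add, add_mul, mul_smul_comm, smul_mul_assoc, mul_one, one_mul, h2]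
  abel

lemma kQ (N : ℕ) (a : ℕ → ℝ) (ν : ℝ) (M : MatC N) :
    M * Amat N a * Bmat N ν = M * Bmat N ν * Amat N a - M * Amat N a := by
  rw [mul_assoc, keyB, mul_sub, ← mul_assoc]

/-- the key fact: `z` acts by pointwise right multiplication, with no derivative term. -/
lemma z_apply (N : ℕ) (a : ℕ → ℝ) (ν : ℝ) (φ : ℂ → ℂ) (Q : ℝ → MatC N) (x : ℝ) :
    zElt N a ν φ Q x = (x : ℂ) • (Q x * Amat N a) - Q x * Bmat N ν := by
  simp only [zElt, Pi.add_apply, Pi.sub_apply, Pi.smul_apply, OpD, OpDdag, OpM, OpMj,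
    Bmat_def, pow_one, iteratedDeriv_one, mul_sub, mul_one]
  module

lemma matHasDerivAtMulConst {N : ℕ} {Q : ℝ → MatC N} {Q' : MatC N} {x : ℝ}
    (hQ : HasDerivAt Q Q' x) (M : MatC N) :
    HasDerivAt (fun y => Q y * M) (Q' * M) x := by
  have h := (LinearMap.toContinuousLinearMap
      ((LinearMap.mulRight ℂ M).restrictScalars ℝ)).hasFDerivAt.comp_hasDerivAt x hQ
  exact h

lemma hasDerivAt_z (N : ℕ) (a : ℕ → ℝ) (ν : ℝ) (φ : ℂ → ℂ) {Q : ℝ → MatC N}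
    {Q' : MatC N} {x : ℝ} (hQ : HasDerivAt Q Q' x) :
    HasDerivAt (zElt N a ν φ Q)
      (Q x * Amat N a + (x : ℂ) • (Q' * Amat N a) - Q' * Bmat N ν) x := by
  have h1 : HasDerivAt (fun y : ℝ => ((y : ℝ) : ℂ) • (Q y * Amat N a))
      ((x : ℂ) • (Q' * Amat N a) + (1 : ℂ) • (Q x * Amat N a)) x :=
    (Complex.ofRealCLM.hasDerivAt).smul (matHasDerivAtMulConst hQ (Amat N a))
  have h2 := h1.sub (matHasDerivAtMulConst hQ (Bmat N ν))
  have e : (fun y : ℝ => ((y : ℝ) : ℂ) • (Q y * Amat N a) - Q y * Bmat N ν)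
      = zElt N a ν φ Q := funext fun y => (z_apply N a ν φ Q y).symm
  rw [← e]
  have hd : Q x * Amat N a + (x : ℂ) • (Q' * Amat N a) - Q' * Bmat N ν
      = ((x : ℂ) • (Q' * Amat N a) + (1 : ℂ) • (Q x * Amat N a)) - Q' * Bmat N ν := by
    module
  rw [hd]
  exact h2

lemma brD (N : ℕ) (a : ℕ → ℝ) (ν : ℝ) (φ : ℂ → ℂ) (Q : ℝ → MatC N)
    (hQ : ContDiff ℝ ∞ Q) (x : ℝ) :
    OpD N a (zElt N a ν φ Q) x - zElt N a ν φ (OpD N a Q) x = 0 := by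
  have hQ' : HasDerivAt Q (deriv Q x) x :=
    ((hQ.differentiable (by simp)) x).hasDerivAt
  have hz := hasDerivAt_z N a ν φ hQ'
  simp only [OpD, hz.deriv, z_apply, mul_sub, sub_mul, add_mul, mul_one, one_mul,
    smul_mul_assoc, smul_sub, smul_add]
  erw [hz.deriv]
  rw [kQ]
  module


lemma brDdag (N : ℕ) (a : ℕ → ℝ) (ν : ℝ) (φ : ℂ → ℂ) (Q : ℝ → MatC N)
    (hQ : ContDiff ℝ ∞ Q) (x : ℝ) :
    OpDdag N ν φ (zElt N a ν φ Q) x - zElt N a ν φ (OpDdag N ν φ Q) x = 0 := by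
  have hQ' : HasDerivAt Q (deriv Q x) x :=
    ((hQ.differentiable (by simp)) x).hasDerivAt
  have hz := hasDerivAt_z N a ν φ hQ'
  simp only [OpDdag, Bmat_def, hz.deriv, z_apply, mul_sub, sub_mul, add_mul, neg_mul,
    mul_one, one_mul, smul_mul_assoc, smul_sub, smul_add, smul_neg]
  erw [hz.deriv]
  rw [kQ]
  module

lemma brM (N : ℕ) (a : ℕ → ℝ) (ν : ℝ) (φ : ℂ → ℂ) (Q : ℝ → MatC N) (x : ℝ) :
    OpM N (zElt N a ν φ Q) x - zElt N a ν φ (OpM N Q) x = 0 := by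
  simp only [OpM, z_apply, smul_mul_assoc, smul_sub]
  module

lemma brMj (N : ℕ) (a : ℕ → ℝ) (ν : ℝ) (φ : ℂ → ℂ) (j : ℕ) (Q : ℝ → MatC N) (x : ℝ) :
    OpMj N φ j (zElt N a ν φ Q) x - zElt N a ν φ (OpMj N φ j Q) x = 0 := by
  simp only [OpMj, z_apply, smul_mul_assoc, smul_sub]
  module

/-- the element `z = 𝒟 + 𝒟† + 2m − m₁` is central in `g_φ`:
`[z, w] = 0` for every `w ∈ g_φ` (the bracket being `Q·[z,w] = (w (z Q)) − (z (w Q))`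
in the right-action convention). -/
theorem z_is_central
    (N : ℕ) (hN : 2 ≤ N) (a : ℕ → ℝ) (ν : ℝ) (hν : 0 < ν)
    (φ : ℂ → ℂ) (hφ : Differentiable ℂ φ) :
    ∀ w ∈ gphi N a ν φ, ∀ Q : ℝ → MatC N, ContDiff ℝ ∞ Q → ∀ x : ℝ, 0 < x →
      rbrk (zElt N a ν φ) w Q x = 0 := by
  intro w hw
  induction hw using Submodule.span_induction with
  | mem w h =>
    intro Q hQ x hx
    simp only [rbrk, Pi.sub_apply]
    rcases h with h | ⟨j, rfl⟩
    · simp only [Set.mem_insert_iff, Set.mem_singleton_iff] at h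
      rcases h with rfl | rfl | rfl | rfl
      · simp
      · exact brD N a ν φ Q hQ x
      · exact brDdag N a ν φ Q hQ x
      · exact brM N a ν φ Q x
    · exact brMj N a ν φ (j + 1) Q x
  | zero =>
    intro Q hQ x hx
    simp [rbrk, z_apply]
  | add w₁ w₂ h₁ h₂ ih₁ ih₂ =>
    intro Q hQ x hx
    have f₁ : w₁ (zElt N a ν φ Q) x
        = (x : ℂ) • (w₁ Q x * Amat N a) - w₁ Q x * Bmat N ν := by
      have h := ih₁ Q hQ x hx
      simp only [rbrk, Pi.sub_apply, z_apply] at h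
      exact sub_eq_zero.mp h
    have f₂ : w₂ (zElt N a ν φ Q) x
        = (x : ℂ) • (w₂ Q x * Amat N a) - w₂ Q x * Bmat N ν := by
      have h := ih₂ Q hQ x hx
      simp only [rbrk, Pi.sub_apply, z_apply] at h
      exact sub_eq_zero.mp h
    simp only [rbrk, Pi.sub_apply, Pi.add_apply, z_apply, f₁, f₂, add_mul, smul_add]
    abel
  | smul c w hmem ih =>
    intro Q hQ x hx
    have f : w (zElt N a ν φ Q) x
        = (x : ℂ) • (w Q x * Amat N a) - w Q x * Bmat N ν := by
      have h := ih Q hQ x hx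
      simp only [rbrk, Pi.sub_apply, z_apply] at h
      exact sub_eq_zero.mp h
    simp only [rbrk, Pi.sub_apply, Pi.smul_apply, z_apply, f, smul_mul_assoc,
      smul_sub]
    module
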